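/- Let a ≥ 10^10, c = (a+√(a²+4))/2, A = (a+√(a²+4))/(2√(a²+4)), α = (−a+√(a²+4))/2, q_n the convergent denominators, and i = ⌊q_{n+1}/2⌋. If S = ∑_{ν=n+2}^∞ T_ν where ‖T_ν‖_∞ ≤ ‖q_ν·α‖, then for all x ∈ S¹: |S^{(i)}(x) − S^{(i)}(0)| ≤ 2·i·∑_{ν=n+2}^∞ ‖q_ν·α‖ < 4·c^{−2}. -/

import Mathlib

private def auxP (a : ℕ) : ℕ → ℤ
  | 0 => 0
  | 1 => 1
  | (n + 2) => a * auxP a (n + 1) + auxP a n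

theorem stmt16 (a : ℕ) (ha : 10 ^ 10 ≤ a) (α c A : ℝ)
    (hα : α = (-(a : ℝ) + Real.sqrt ((a : ℝ) ^ 2 + 4)) / 2)
    (hc : c = ((a : ℝ) + Real.sqrt ((a : ℝ) ^ 2 + 4)) / 2)
    (hA : A = ((a : ℝ) + Real.sqrt ((a : ℝ) ^ 2 + 4)) / (2 * Real.sqrt ((a : ℝ) ^ 2 + 4)))
    (q : ℕ → ℕ) (hq : ∀ m, (q m : ℝ) = (GenContFract.of α).dens m)
    (n i : ℕ) (hi : i = q (n + 1) / 2)
    (T : ℕ → AddCircle (1 : ℝ) → ℝ)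
    (hT : ∀ ν : ℕ, ∀ x, |T ν x| ≤ ‖(((q ν : ℝ) * α : ℝ) : AddCircle (1 : ℝ))‖)
    (S : AddCircle (1 : ℝ) → ℝ)
    (hS : ∀ x, HasSum (fun ν : ℕ => T (n + 2 + ν) x) (S x)) :
    ∀ x : AddCircle (1 : ℝ),
      |(∑ k ∈ Finset.range i, S (x + k • ((α : ℝ) : AddCircle (1 : ℝ)))) -
            ∑ k ∈ Finset.range i, S ((0 : AddCircle (1 : ℝ)) + k • ((α : ℝ) : AddCircle (1 : ℝ)))| ≤
          2 * i * ∑' ν : ℕ, ‖(((q (n + 2 + ν) : ℝ) * α : ℝ) : AddCircle (1 : ℝ))‖ ∧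
        2 * i * (∑' ν : ℕ, ‖(((q (n + 2 + ν) : ℝ) * α : ℝ) : AddCircle (1 : ℝ))‖) < 4 / c ^ 2 := by
  -- basic real-number facts
  set s : ℝ := Real.sqrt ((a : ℝ) ^ 2 + 4) with hs
  have ha1 : (2 : ℝ) ≤ (a : ℝ) := by
    have : (2 : ℕ) ≤ a := le_trans (by norm_num) ha
    exact_mod_cast this
  have hs2 : s ^ 2 = (a : ℝ) ^ 2 + 4 := Real.sq_sqrt (by positivity)
  have hsa : (a : ℝ) < s := by
    have := Real.lt_sqrt (x := (a : ℝ)) (y := (a : ℝ) ^ 2 + 4) (by positivity)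
    rw [hs]; exact this.mpr (by linarith)
  have hs1 : s < (a : ℝ) + 1 := by
    rw [hs]
    have : ((a : ℝ) ^ 2 + 4) < ((a : ℝ) + 1) ^ 2 := by nlinarith
    exact (Real.sqrt_lt' (by linarith)).mpr this
  have hα_pos : 0 < α := by rw [hα]; linarith
  have hα_half : α < 1 / 2 := by rw [hα]; linarith
  have hcα : c = (a : ℝ) + α := by rw [hc, hα]; ring
  have hαc : α * c = 1 := by
    rw [hα, hc]
    have : ((-(a : ℝ) + s) / 2) * (((a : ℝ) + s) / 2) = (s ^ 2 - (a : ℝ) ^ 2) / 4 := by ring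
    rw [this, hs2]; ring
  have hc_pos : 0 < c := by rw [hcα]; linarith
  have hα1 : α < 1 := by linarith
  have hfract : Int.fract α = α := Int.fract_eq_self.mpr ⟨hα_pos.le, hα1⟩
  have hαinv : α⁻¹ = c := by
    rw [inv_eq_one_div, eq_comm, eq_div_iff hα_pos.ne']
    linear_combination hαc
  have hfractc : Int.fract α⁻¹ = α := by
    rw [hαinv, hcα]
    rw [show ((a : ℝ) + α) = α + ((a : ℤ) : ℝ) by push_cast; ring]
    rw [Int.fract_add_intCast, hfract]
  have hfloorc : (⌊α⁻¹⌋ : ℝ) = (a : ℝ) := by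
    have : ⌊α⁻¹⌋ = (a : ℤ) := by
      rw [Int.floor_eq_iff, hαinv, hcα]
      constructor <;> push_cast <;> linarith
    rw [this]; push_cast; ring
  -- the continued fraction of α has all partial denominators equal to a
  have hS0 : ∀ m, (GenContFract.of α).s.get? m = some ⟨1, (a : ℝ)⟩ := by
    have hne : Int.fract α ≠ 0 := by rw [hfract]; exact hα_pos.ne'
    have hnec : Int.fract α⁻¹ ≠ 0 := by rw [hfractc]; exact hα_pos.ne'
    have hinv0 : (GenContFract.of α⁻¹).s.get? 0 = some ⟨1, (a : ℝ)⟩ := by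
      have := GenContFract.of_s_head (v := α⁻¹) hnec
      rw [hfractc] at this
      rw [show ((GenContFract.of α⁻¹).s.get? 0) = (GenContFract.of α⁻¹).s.head from rfl, this,
        hfloorc]
    have hinvall : ∀ m, (GenContFract.of α⁻¹).s.get? m = some ⟨1, (a : ℝ)⟩ := by
      intro m
      induction m with
      | zero => exact hinv0
      | succ m ih =>
        rw [GenContFract.of_s_succ, hfractc, ih]
    intro m
    cases m with
    | zero =>
      have := GenContFract.of_s_head (v := α) hne
      rw [hfract] at this
      rw [show ((GenContFract.of α).s.get? 0) = (GenContFract.of α).s.head from rfl, this, hfloorc]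
    | succ m =>
      rw [GenContFract.of_s_succ, hfract, hinvall]
  -- denominators
  have hq0 : (q 0 : ℝ) = 1 := by rw [hq]; exact GenContFract.zeroth_den_eq_one
  have hq1 : (q 1 : ℝ) = (a : ℝ) := by rw [hq]; exact GenContFract.first_den_eq (hS0 0)
  have hqrec : ∀ m, (q (m + 2) : ℝ) = (a : ℝ) * (q (m + 1) : ℝ) + (q m : ℝ) := by
    intro m
    rw [hq, hq, hq]
    have := GenContFract.dens_recurrence (g := GenContFract.of α) (n := m)
      (hS0 (m + 1)) rfl rfl
    rw [this]; ring
  have hc2 : c ^ 2 = (a : ℝ) * c + 1 := by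
    have : c ^ 2 = (a : ℝ) * c + α * c := by rw [hcα]; ring
    rw [this, hαc]
  -- q m ≤ c ^ m
  have hqle : ∀ m, (q m : ℝ) ≤ c ^ m := by
    have key : ∀ m, (q m : ℝ) ≤ c ^ m ∧ (q (m + 1) : ℝ) ≤ c ^ (m + 1) := by
      intro m
      induction m with
      | zero =>
        constructor
        · rw [hq0]; norm_num
        · rw [hq1]
          calc (a : ℝ) ≤ c := by rw [hcα]; linarith
            _ = c ^ (0 + 1) := (pow_one c).symm
      | succ m ih =>
        refine ⟨ih.2, ?_⟩
        rw [hqrec m]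
        have h1 : (a : ℝ) * (q (m + 1) : ℝ) ≤ (a : ℝ) * c ^ (m + 1) := by
          apply mul_le_mul_of_nonneg_left ih.2 (by positivity)
        have h2 : c ^ (m + 2) = (a : ℝ) * c ^ (m + 1) + c ^ m := by
          have : c ^ (m + 2) = c ^ m * c ^ 2 := by ring
          rw [this, hc2]; ring
        rw [h2]; linarith [ih.1]
    exact fun m => (key m).1
  -- q ν * α is within α^(ν+1) of the integer auxP a ν
  have hqα : ∀ ν, (q ν : ℝ) * α - ((auxP a ν : ℤ) : ℝ) = (-1) ^ ν * α ^ (ν + 1) := by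
    have haα : (a : ℝ) * α + α ^ 2 = 1 := by
      have : α * c = α * ((a : ℝ) + α) := by rw [hcα]
      rw [hαc] at this; nlinarith [this]
    have key : ∀ ν, ((q ν : ℝ) * α - ((auxP a ν : ℤ) : ℝ) = (-1) ^ ν * α ^ (ν + 1)) ∧
        ((q (ν + 1) : ℝ) * α - ((auxP a (ν + 1) : ℤ) : ℝ) = (-1) ^ (ν + 1) * α ^ (ν + 2)) := by
      intro ν
      induction ν with
      | zero =>
        constructor
        · simp [auxP, hq0]
        · simp only [auxP, hq1]
          push_cast
          linear_combination haα
      | succ ν ih =>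
        refine ⟨ih.2, ?_⟩
        have hP : ((auxP a (ν + 2) : ℤ) : ℝ) = (a : ℝ) * ((auxP a (ν + 1) : ℤ) : ℝ)
            + ((auxP a ν : ℤ) : ℝ) := by
          rw [show auxP a (ν + 2) = a * auxP a (ν + 1) + auxP a ν from rfl]; push_cast; ring
        rw [hqrec ν, hP]
        have e1 := ih.1
        have e2 := ih.2
        have expand : ((a : ℝ) * (q (ν + 1) : ℝ) + (q ν : ℝ)) * α
            - ((a : ℝ) * ((auxP a (ν + 1) : ℤ) : ℝ) + ((auxP a ν : ℤ) : ℝ))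
            = (a : ℝ) * ((q (ν + 1) : ℝ) * α - ((auxP a (ν + 1) : ℤ) : ℝ))
              + ((q ν : ℝ) * α - ((auxP a ν : ℤ) : ℝ)) := by ring
        rw [expand, e1, e2]
        linear_combination (-((-1 : ℝ) ^ ν * α ^ (ν + 1))) * haα
    exact fun ν => (key ν).1
  -- norm bound
  have hnorm : ∀ ν, ‖(((q ν : ℝ) * α : ℝ) : AddCircle (1 : ℝ))‖ ≤ α ^ (ν + 1) := by
    intro ν
    have h1 : ‖(((q ν : ℝ) * α : ℝ) : AddCircle (1 : ℝ))‖
        = |(q ν : ℝ) * α - round ((q ν : ℝ) * α)| := by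
      rw [AddCircle.norm_eq]; norm_num
    rw [h1]
    calc |(q ν : ℝ) * α - round ((q ν : ℝ) * α)| ≤ |(q ν : ℝ) * α - (auxP a ν : ℝ)| :=
          round_le _ _
      _ = α ^ (ν + 1) := by
          rw [hqα ν, abs_mul, abs_pow, abs_pow, abs_neg, abs_one, one_pow, one_mul,
            abs_of_pos hα_pos]
  -- summability and tsum bound
  set f : ℕ → ℝ := fun ν => ‖(((q (n + 2 + ν) : ℝ) * α : ℝ) : AddCircle (1 : ℝ))‖ with hf
  have hgsum : Summable (fun ν : ℕ => α ^ (n + 3) * α ^ ν) :=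
    (summable_geometric_of_lt_one hα_pos.le hα1).mul_left _
  have hfle : ∀ ν, f ν ≤ α ^ (n + 3) * α ^ ν := by
    intro ν
    have := hnorm (n + 2 + ν)
    calc f ν ≤ α ^ (n + 2 + ν + 1) := this
      _ = α ^ (n + 3) * α ^ ν := by ring
  have hfsum : Summable f := Summable.of_nonneg_of_le (fun ν => norm_nonneg _) hfle hgsum
  set M : ℝ := ∑' ν : ℕ, f ν with hM
  have hM_nonneg : 0 ≤ M := tsum_nonneg fun ν => norm_nonneg _
  have hM_le : M ≤ 2 * α ^ (n + 3) := by
    have h1 : M ≤ ∑' ν : ℕ, α ^ (n + 3) * α ^ ν := Summable.tsum_le_tsum hfle hfsum hgsum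
    have h2 : ∑' ν : ℕ, α ^ (n + 3) * α ^ ν = α ^ (n + 3) * (1 - α)⁻¹ := by
      rw [tsum_mul_left, tsum_geometric_of_lt_one hα_pos.le hα1]
    have h3 : (1 - α)⁻¹ ≤ 2 := by
      rw [inv_le_comm₀ (by linarith) (by norm_num)]
      linarith
    calc M ≤ α ^ (n + 3) * (1 - α)⁻¹ := by rw [← h2]; exact h1
      _ ≤ α ^ (n + 3) * 2 := mul_le_mul_of_nonneg_left h3 (by positivity)
      _ = 2 * α ^ (n + 3) := by ring
  -- |S y| ≤ M
  have hS_bound : ∀ y, |S y| ≤ M := by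
    intro y
    have hTs : Summable (fun ν : ℕ => |T (n + 2 + ν) y|) :=
      Summable.of_nonneg_of_le (fun ν => abs_nonneg _) (fun ν => hT _ y) hfsum
    have hSy : S y = ∑' ν : ℕ, T (n + 2 + ν) y := (hS y).tsum_eq.symm
    rw [hSy]
    calc |∑' ν : ℕ, T (n + 2 + ν) y| ≤ ∑' ν : ℕ, |T (n + 2 + ν) y| := by
          simpa using norm_tsum_le_tsum_norm (f := fun ν : ℕ => T (n + 2 + ν) y) (by simpa using hTs)
      _ ≤ M := Summable.tsum_le_tsum (fun ν => hT _ y) hTs hfsum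
  intro x
  constructor
  · calc |(∑ k ∈ Finset.range i, S (x + k • ((α : ℝ) : AddCircle (1 : ℝ)))) -
          ∑ k ∈ Finset.range i, S ((0 : AddCircle (1 : ℝ)) + k • ((α : ℝ) : AddCircle (1 : ℝ)))|
        = |∑ k ∈ Finset.range i, (S (x + k • ((α : ℝ) : AddCircle (1 : ℝ)))
            - S ((0 : AddCircle (1 : ℝ)) + k • ((α : ℝ) : AddCircle (1 : ℝ))))| := by
          rw [Finset.sum_sub_distrib]
      _ ≤ ∑ k ∈ Finset.range i, |S (x + k • ((α : ℝ) : AddCircle (1 : ℝ)))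
            - S ((0 : AddCircle (1 : ℝ)) + k • ((α : ℝ) : AddCircle (1 : ℝ)))| :=
          Finset.abs_sum_le_sum_abs _ _
      _ ≤ ∑ k ∈ Finset.range i, 2 * M := by
          apply Finset.sum_le_sum
          intro k _
          calc |S (x + k • ((α : ℝ) : AddCircle (1 : ℝ)))
                - S ((0 : AddCircle (1 : ℝ)) + k • ((α : ℝ) : AddCircle (1 : ℝ)))|
              ≤ |S (x + k • ((α : ℝ) : AddCircle (1 : ℝ)))|
                + |S ((0 : AddCircle (1 : ℝ)) + k • ((α : ℝ) : AddCircle (1 : ℝ)))| :=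
                abs_sub _ _
            _ ≤ M + M := add_le_add (hS_bound _) (hS_bound _)
            _ = 2 * M := by ring
      _ = 2 * i * M := by rw [Finset.sum_const, Finset.card_range]; push_cast; ring
  · -- 2 i M < 4 / c^2
    have hi_le : (2 * i : ℝ) ≤ (q (n + 1) : ℝ) := by
      have : 2 * i ≤ q (n + 1) := by rw [hi]; omega
      exact_mod_cast this
    have hαc2 : α ^ 2 = 1 / c ^ 2 := by
      rw [eq_div_iff (by positivity)]
      linear_combination (α * c + 1) * hαc
    have hkey : c ^ (n + 1) * (2 * α ^ (n + 3)) = 2 * α ^ 2 := by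
      have : c ^ (n + 1) * α ^ (n + 3) = (c * α) ^ (n + 1) * α ^ 2 := by ring
      rw [mul_comm c α] at this
      rw [show c ^ (n + 1) * (2 * α ^ (n + 3)) = 2 * (c ^ (n + 1) * α ^ (n + 3)) by ring,
        this, hαc, one_pow, one_mul]
    calc 2 * (i : ℝ) * M ≤ (q (n + 1) : ℝ) * M :=
          mul_le_mul_of_nonneg_right hi_le hM_nonneg
      _ ≤ c ^ (n + 1) * (2 * α ^ (n + 3)) :=
          mul_le_mul (hqle (n + 1)) hM_le hM_nonneg (by positivity)
      _ = 2 * α ^ 2 := hkey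
      _ < 4 / c ^ 2 := by
          rw [hαc2]
          have : 2 * (1 / c ^ 2) < 4 * (1 / c ^ 2) := by
            apply mul_lt_mul_of_pos_right (by norm_num) (by positivity)
          calc 2 * (1 / c ^ 2) < 4 * (1 / c ^ 2) := this
            _ = 4 / c ^ 2 := by ring
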